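/- Mospan property: let μ be a Borel probability measure on G, inner regular by compact sets and outer regular by open sets, and let K ⊆ G be compact with μ(K) > 0. (a) If 1_G is not an interior point of KK⁻¹, then μ_-(K) = 0; equivalently, there is a sequence t_n → 1_G with lim_n μ(t_nK) = 0. (b) Conversely, if G is in addition a Baire space and μ_-(K) = 0 < μ(K), then there is a sequence t_n → 1_G with lim_n μ(t_nK) = 0, and there exists C ⊆ K with μ(K ∖ C) = 0 such that 1_G is not an interior point of CC⁻¹. -/

import Mathlib

open Set Topology TopologicalSpace MeasureTheory Filter Pointwise ENNReal

section Aux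

variable {G : Type*} [Group G] [MetricSpace G] [IsTopologicalGroup G]
  [MeasurableSpace G] [BorelSpace G]

lemma aux_exists_small (μ : Measure G) [IsProbabilityMeasure μ] [μ.OuterRegular]
    (K : Set G) (hK : IsCompact K) (hint : (1 : G) ∉ interior (K * K⁻¹))
    {δ : ℝ} (hδ : 0 < δ) {ε : ℝ≥0∞} (hε : 0 < ε) :
    ∃ t : G, dist (1 : G) t < δ ∧ μ ((t * ·) '' K) < ε := by
  obtain ⟨U, hKU, hUopen, hUlt⟩ := K.exists_isOpen_lt_of_lt (μ K + ε)
    (ENNReal.lt_add_right (measure_ne_top μ K) hε.ne')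
  obtain ⟨V, hV, hVK⟩ := compact_open_separated_mul_left hK hUopen hKU
  obtain ⟨δ', hδ', hballV⟩ := Metric.mem_nhds_iff.mp hV
  set r := min δ δ' with hr
  have hrpos : 0 < r := lt_min hδ hδ'
  have hnsub : ¬ (Metric.ball (1:G) r ⊆ K * K⁻¹) := fun hsub =>
    hint ((interior_maximal hsub Metric.isOpen_ball) (Metric.mem_ball_self hrpos))
  obtain ⟨t, htball, htnot⟩ := Set.not_subset.mp hnsub
  have htd : dist t 1 < r := Metric.mem_ball.mp htball
  have htV : t ∈ V := hballV (Metric.mem_ball.mpr (lt_of_lt_of_le htd (min_le_right _ _)))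
  have hdisj : Disjoint ((t * ·) '' K) K := by
    rw [Set.disjoint_left]
    rintro x ⟨k, hk, rfl⟩ hxK
    exact htnot ⟨t * k, hxK, k⁻¹, Set.inv_mem_inv.mpr hk, by group⟩
  have hsubU : (t * ·) '' K ⊆ U := by
    rintro x ⟨k, hk, rfl⟩
    exact hVK ⟨t, htV, k, hk, rfl⟩
  have hmeasle : μ ((t * ·) '' K) + μ K ≤ μ U := by
    rw [← measure_union hdisj hK.isClosed.measurableSet]
    exact measure_mono (Set.union_subset hsubU hKU)
  have : μ ((t * ·) '' K) + μ K < ε + μ K := by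
    calc μ ((t * ·) '' K) + μ K ≤ μ U := hmeasle
    _ < μ K + ε := hUlt
    _ = ε + μ K := add_comm _ _
  exact ⟨t, by rw [dist_comm]; exact lt_of_lt_of_le htd (min_le_left _ _),
    (ENNReal.add_lt_add_iff_right (measure_ne_top μ K)).mp this⟩

lemma aux_exists_small' (μ : Measure G) (K : Set G)
    (h : (⨆ (δ : ℝ) (_ : 0 < δ), ⨅ (t : G) (_ : dist (1 : G) t < δ),
      μ ((t * ·) '' K)) = 0)
    {δ : ℝ} (hδ : 0 < δ) {ε : ℝ≥0∞} (hε : 0 < ε) :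
    ∃ t : G, dist (1 : G) t < δ ∧ μ ((t * ·) '' K) < ε := by
  have h1 : (⨅ (t : G) (_ : dist (1 : G) t < δ), μ ((t * ·) '' K)) = 0 :=
    le_antisymm (h ▸ le_iSup₂ (f := fun (δ : ℝ) (_ : 0 < δ) =>
      ⨅ (t : G) (_ : dist (1 : G) t < δ), μ ((t * ·) '' K)) δ hδ) (zero_le)
  have h2 : (⨅ (t : G) (_ : dist (1 : G) t < δ), μ ((t * ·) '' K)) < ε := h1 ▸ hε
  obtain ⟨t, ht⟩ := iInf_lt_iff.mp h2
  obtain ⟨htd, htv⟩ := iInf_lt_iff.mp ht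
  exact ⟨t, htd, htv⟩

lemma aux_supinf_zero (μ : Measure G) (K : Set G)
    (hex : ∀ (δ : ℝ), 0 < δ → ∀ (ε : ℝ≥0∞), 0 < ε →
      ∃ t : G, dist (1 : G) t < δ ∧ μ ((t * ·) '' K) < ε) :
    (⨆ (δ : ℝ) (_ : 0 < δ), ⨅ (t : G) (_ : dist (1 : G) t < δ),
      μ ((t * ·) '' K)) = 0 := by
  refine le_antisymm (iSup₂_le fun δ hδ => ?_) (zero_le)
  refine ENNReal.le_of_forall_pos_le_add fun ε hε _ => ?_
  obtain ⟨t, htd, htv⟩ := hex δ hδ ε (by exact_mod_cast hε)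
  rw [zero_add]
  exact iInf₂_le_of_le t htd htv.le

lemma aux_seq (μ : Measure G) (K : Set G)
    (hex : ∀ (δ : ℝ), 0 < δ → ∀ (ε : ℝ≥0∞), 0 < ε →
      ∃ t : G, dist (1 : G) t < δ ∧ μ ((t * ·) '' K) < ε) :
    ∃ t : ℕ → G, Tendsto t atTop (nhds 1) ∧
      Tendsto (fun n => μ ((t n * ·) '' K)) atTop (nhds 0) := by
  have H : ∀ n : ℕ, ∃ t : G, dist (1:G) t < (1/2)^n ∧
      μ ((t * ·) '' K) < ENNReal.ofReal ((1/2)^n) :=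
    fun n => hex _ (pow_pos one_half_pos n) _
      (ENNReal.ofReal_pos.mpr (pow_pos one_half_pos n))
  choose t ht1 ht2 using H
  have hpow : Tendsto (fun n : ℕ => ((1:ℝ)/2)^n) atTop (nhds 0) :=
    tendsto_pow_atTop_nhds_zero_of_lt_one (by norm_num) (by norm_num)
  refine ⟨t, ?_, ?_⟩
  · rw [Metric.tendsto_atTop]
    intro ε hε
    obtain ⟨N, hN⟩ := eventually_atTop.mp (hpow.eventually (eventually_lt_nhds hε))
    exact ⟨N, fun n hn => by rw [dist_comm]; exact (ht1 n).trans (hN n hn)⟩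
  · refine tendsto_of_tendsto_of_tendsto_of_le_of_le tendsto_const_nhds ?_
      (fun n => zero_le) (fun n => (ht2 n).le)
    have := (ENNReal.continuous_ofReal.tendsto 0).comp hpow
    simpa [Function.comp_def] using this

end Aux

section AuxC


set_option maxHeartbeats 1000000 in
lemma aux_C {G : Type*} [Group G] [MetricSpace G] [IsTopologicalGroup G]
    [SeparableSpace G] [MeasurableSpace G] [BorelSpace G]
    (μ : Measure G) [IsProbabilityMeasure μ] [μ.OuterRegular]
    (K : Set G) (hK : IsCompact K) (hμK : 0 < μ K)
    (hex : ∀ (δ : ℝ), 0 < δ → ∀ (ε : ℝ≥0∞), 0 < ε →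
      ∃ t : G, dist (1 : G) t < δ ∧ μ ((t * ·) '' K) < ε) :
    ∃ C ⊆ K, μ (K \ C) = 0 ∧ (1 : G) ∉ interior (C * C⁻¹) := by
  by_contra h'
  push_neg at h'
  -- h' : ∀ C ⊆ K, μ (K \ C) = 0 → 1 ∈ interior (C * C⁻¹)
  have hKmeas : MeasurableSet K := hK.isClosed.measurableSet
  -- Lemma A : a uniform radius
  have hA : ∃ r > 0, ∀ C, C ⊆ K → μ (K \ C) = 0 → Metric.ball (1:G) r ⊆ C * C⁻¹ := by
    by_contra hA
    push_neg at hA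
    have H : ∀ n : ℕ, ∃ C, C ⊆ K ∧ μ (K \ C) = 0 ∧
        ¬ (Metric.ball (1:G) (1/(n+1)) ⊆ C * C⁻¹) := by
      intro n
      obtain ⟨C, h1, h2, h3⟩ := hA (1/(n+1)) (by positivity)
      exact ⟨C, h1, h2, h3⟩
    choose Cs hCs1 hCs2 hCs3 using H
    have hDK : (⋂ n, Cs n) ⊆ K := (Set.iInter_subset Cs 0).trans (hCs1 0)
    have hDnull : μ (K \ ⋂ n, Cs n) = 0 := by
      rw [Set.diff_iInter]
      exact measure_iUnion_null fun n => hCs2 n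
    obtain ⟨ε, hε, hball⟩ := Metric.mem_nhds_iff.mp
      (mem_interior_iff_mem_nhds.mp (h' _ hDK hDnull))
    obtain ⟨n, hn⟩ := exists_nat_one_div_lt hε
    refine hCs3 n ?_
    refine (Metric.ball_subset_ball hn.le).trans (hball.trans ?_)
    exact Set.mul_subset_mul (Set.iInter_subset Cs n)
      (Set.inv_subset_inv.mpr (Set.iInter_subset Cs n))
  obtain ⟨r, hr, hrball⟩ := hA
  -- local compactness
  have hballKK : Metric.ball (1:G) r ⊆ K * K⁻¹ :=
    hrball K le_rfl (by simp)
  have hcball : IsCompact (Metric.closedBall (1:G) (r/2)) :=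
    (hK.mul hK.inv).of_isClosed_subset Metric.isClosed_closedBall
      ((Metric.closedBall_subset_ball (by linarith)).trans hballKK)
  haveI : LocallyCompactSpace G :=
    hcball.locallyCompactSpace_of_mem_nhds_of_group
      (Metric.closedBall_mem_nhds _ (by positivity))
  haveI : SecondCountableTopology G := UniformSpace.secondCountable_of_separable G
  set K₀ : PositiveCompacts G :=
    ⟨⟨Metric.closedBall (1:G) (r/2), hcball⟩,
      ⟨1, interior_maximal Metric.ball_subset_closedBall Metric.isOpen_ball
        (Metric.mem_ball_self (by positivity))⟩⟩ with hK₀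
  set lam : Measure G := Measure.haarMeasure K₀ with hlam
  set ν : Measure G := μ.restrict K with hν
  -- step (i): the a.c. part of ν w.r.t. lam vanishes
  have hρ0 : lam.withDensity (ν.rnDeriv lam) = 0 := by
    by_contra hρ
    set ρ : Measure G := lam.withDensity (ν.rnDeriv lam) with hρdef
    have hρν : ρ ≤ ν := Measure.withDensity_rnDeriv_le ν lam
    haveI : IsFiniteMeasure ρ := isFiniteMeasure_of_le ν hρν
    have hρco : ρ Kᶜ = 0 := by
      refine le_antisymm ?_ (zero_le)
      calc ρ Kᶜ ≤ ν Kᶜ := hρν Kᶜ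
      _ = μ (Kᶜ ∩ K) := Measure.restrict_apply hKmeas.compl
      _ = 0 := by rw [Set.compl_inter_self, measure_empty]
    set c : ℝ≥0∞ := ρ K with hc
    have hc0 : c ≠ 0 := by
      intro h0
      apply hρ
      refine Measure.measure_univ_eq_zero.mp ?_
      rw [← Set.union_compl_self K]  -- univ = K ∪ Kᶜ
      exact le_antisymm ((measure_union_le _ _).trans (by rw [← hc, h0, hρco, add_zero]))
        (zero_le)
    have hcfin : c ≠ ∞ := measure_ne_top ρ K
    set g : G → ℝ≥0∞ := ν.rnDeriv lam with hg
    have hgmeas : Measurable g := Measure.measurable_rnDeriv ν lam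
    have hρap : ∀ {A : Set G}, MeasurableSet A → ρ A = ∫⁻ x in A, g x ∂lam :=
      fun hA => withDensity_apply g hA
    have hmono : Monotone (fun (M : ℕ) (x : G) => min (g x) M) := by
      intro a b hab x
      exact min_le_min le_rfl (by exact_mod_cast Nat.cast_le.mpr hab)
    have hsup : (⨆ M : ℕ, ∫⁻ x in K, min (g x) M ∂lam) = c := by
      rw [hc, hρap hKmeas,
        ← lintegral_iSup (fun M => hgmeas.min measurable_const) hmono]
      refine lintegral_congr fun x => ?_
      refine le_antisymm (iSup_le fun M => min_le_left _ _) ?_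
      rcases eq_or_ne (g x) ∞ with h | h
      · rw [h]
        have : ∀ M : ℕ, (M : ℝ≥0∞) = min ∞ (M : ℝ≥0∞) := fun M => (min_eq_right le_top).symm
        calc (∞ : ℝ≥0∞) = ⨆ M : ℕ, (M : ℝ≥0∞) := ENNReal.iSup_natCast.symm
        _ ≤ ⨆ M : ℕ, min (∞ : ℝ≥0∞) (M : ℝ≥0∞) := iSup_mono fun M => (this M).le
      · obtain ⟨M, hM⟩ := ENNReal.exists_nat_gt h
        exact le_iSup_of_le M (min_eq_left hM.le).symm.le
    have hc8 : (0:ℝ≥0∞) < c/8 := ENNReal.div_pos hc0 (by norm_num)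
    have hsub : c - c/8 < ⨆ M : ℕ, ∫⁻ x in K, min (g x) M ∂lam := by
      rw [hsup]; exact ENNReal.sub_lt_self hcfin hc0 hc8.ne'
    obtain ⟨M, hM⟩ := lt_iSup_iff.mp hsub
    have hsplit : (∫⁻ x in K, min (g x) M ∂lam)
        + ∫⁻ x in K, (g x - min (g x) M) ∂lam = c := by
      rw [hc, hρap hKmeas, ← lintegral_add_left (hgmeas.min measurable_const)]
      exact lintegral_congr fun x => add_tsub_cancel_of_le (min_le_left _ _)
    have hAfin : (∫⁻ x in K, min (g x) M ∂lam) ≠ ∞ := by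
      refine ne_top_of_le_ne_top hcfin ?_
      rw [← hsplit]; exact le_self_add
    have htail : (∫⁻ x in K, (g x - min (g x) M) ∂lam) ≤ c/8 := by
      have h1 : c ≤ (∫⁻ x in K, min (g x) M ∂lam) + c/8 :=
        tsub_le_iff_right.mp hM.le
      have h2 : (∫⁻ x in K, min (g x) M ∂lam)
          + (∫⁻ x in K, (g x - min (g x) M) ∂lam)
          ≤ (∫⁻ x in K, min (g x) M ∂lam) + c/8 := by rw [hsplit]; exact h1
      exact (ENNReal.add_le_add_iff_left hAfin).mp h2
    set δ' : ℝ≥0∞ := c/8/((M+1 : ℕ) : ℝ≥0∞) with hδ'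
    have hδ'pos : 0 < δ' := ENNReal.div_pos hc8.ne' (ENNReal.natCast_ne_top (M+1))
    obtain ⟨U, hKU, hUopen, hUlt⟩ := K.exists_isOpen_lt_of_lt (μ := lam) (lam K + δ')
      (ENNReal.lt_add_right hK.measure_lt_top.ne hδ'pos.ne')
    obtain ⟨V, hV, hVK⟩ := compact_open_separated_mul_left hK hUopen hKU
    obtain ⟨δv, hδv, hballV⟩ := Metric.mem_nhds_iff.mp hV
    obtain ⟨t, htd, htμ⟩ := hex δv hδv (c/4) (ENNReal.div_pos hc0 (by norm_num))
    have htV : t ∈ V := hballV (Metric.mem_ball.mpr (by rwa [dist_comm] at htd))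
    have htKc : IsCompact ((t * ·) '' K) := hK.image (continuous_mul_left t)
    have htKm : MeasurableSet ((t * ·) '' K) := htKc.isClosed.measurableSet
    have hsubU : (t * ·) '' K ⊆ U := by rintro x ⟨k,hk,rfl⟩; exact hVK ⟨t, htV, k, hk, rfl⟩
    have hlamtK : lam ((t * ·) '' K) = lam K := by
      rw [Set.image_mul_left, measure_preimage_mul]
    have hdiffsmall : lam (K \ (t * ·) '' K) < δ' := by
      refine lt_of_le_of_lt (measure_mono (Set.diff_subset_diff_left hKU)) ?_
      refine measure_diff_lt_of_lt_add htKm.nullMeasurableSet hsubU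
        (by rw [hlamtK]; exact hK.measure_lt_top.ne) ?_
      rwa [hlamtK]
    have hρtK : ρ ((t * ·) '' K) ≤ c/4 :=
      le_trans (hρν _) (le_trans (Measure.restrict_le_self _) htμ.le)
    have hMδ' : ((M+1 : ℕ) : ℝ≥0∞) * δ' = c/8 := by
      rw [hδ']
      exact ENNReal.mul_div_cancel (by exact_mod_cast Nat.succ_ne_zero M)
        (ENNReal.natCast_ne_top (M+1))
    have heighth : c/8 + c/8 = c/4 := by
      rw [ENNReal.div_add_div_same, ← two_mul,
        show (8:ℝ≥0∞) = 2 * 4 by norm_num,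
        ENNReal.mul_div_mul_left _ _ (by norm_num) (by norm_num)]
    have hρdiff : ρ (K \ (t * ·) '' K) ≤ c/4 := by
      rw [hρap (hKmeas.diff htKm)]
      have hb1 : (∫⁻ x in K \ (t * ·) '' K, min (g x) M ∂lam)
          ≤ (M:ℝ≥0∞) * lam (K \ (t * ·) '' K) := by
        calc (∫⁻ x in K \ (t * ·) '' K, min (g x) M ∂lam)
            ≤ ∫⁻ _ in K \ (t * ·) '' K, (M:ℝ≥0∞) ∂lam :=
              lintegral_mono fun x => min_le_right _ _
        _ = (M:ℝ≥0∞) * lam (K \ (t * ·) '' K) := setLIntegral_const _ _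
      have hb2 : (∫⁻ x in K \ (t * ·) '' K, (g x - min (g x) M) ∂lam) ≤ c/8 :=
        le_trans (lintegral_mono_set Set.diff_subset) htail
      calc ∫⁻ x in K \ (t * ·) '' K, g x ∂lam
          = (∫⁻ x in K \ (t * ·) '' K, min (g x) M ∂lam)
            + ∫⁻ x in K \ (t * ·) '' K, (g x - min (g x) M) ∂lam := by
            rw [← lintegral_add_left (hgmeas.min measurable_const)]
            exact lintegral_congr fun x => (add_tsub_cancel_of_le (min_le_left _ _)).symm
      _ ≤ (M:ℝ≥0∞) * lam (K \ (t * ·) '' K) + c/8 := add_le_add hb1 hb2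
      _ ≤ (M:ℝ≥0∞) * δ' + c/8 := add_le_add_left (mul_le_mul_right hdiffsmall.le _) _
      _ ≤ ((M+1 : ℕ) : ℝ≥0∞) * δ' + c/8 := by
            refine add_le_add_left (mul_le_mul_left ?_ _) _
            exact_mod_cast Nat.cast_le.mpr (Nat.le_succ M)
      _ = c/8 + c/8 := by rw [hMδ']
      _ = c/4 := heighth
    have hquarters : c/4 + c/4 = c/2 := by
      rw [ENNReal.div_add_div_same, ← two_mul,
        show (4:ℝ≥0∞) = 2 * 2 by norm_num,
        ENNReal.mul_div_mul_left _ _ (by norm_num) (by norm_num)]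
    have hfinal : c < c := by
      calc c = ρ K := hc
      _ ≤ ρ ((t * ·) '' K ∪ (K \ (t * ·) '' K)) := by
          refine measure_mono fun x hx => ?_
          by_cases h : x ∈ (t * ·) '' K
          · exact Or.inl h
          · exact Or.inr ⟨hx, h⟩
      _ ≤ ρ ((t * ·) '' K) + ρ (K \ (t * ·) '' K) := measure_union_le _ _
      _ ≤ c/4 + c/4 := add_le_add hρtK hρdiff
      _ = c/2 := hquarters
      _ < c := ENNReal.half_lt_self hc0 hcfin
    exact lt_irrefl _ hfinal
  -- ν is singular w.r.t. Haar measure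
  have hsing : ν ⟂ₘ lam := by
    have hdec := Measure.singularPart_add_rnDeriv ν lam
    rw [hρ0, add_zero] at hdec
    rw [← hdec]
    exact Measure.mutuallySingular_singularPart ν lam
  obtain ⟨T, hT, hnuT, hlamT⟩ := hsing
  set S : Set G := Tᶜ ∩ K with hSdef
  have hSmeas : MeasurableSet S := hT.compl.inter hKmeas
  have hlamS : lam S = 0 := measure_mono_null Set.inter_subset_left hlamT
  have hmuKS : μ (K \ S) = 0 := by
    have hTK : μ (T ∩ K) = 0 := by
      rw [← Measure.restrict_apply hT]
      exact hnuT
    refine measure_mono_null (fun x hx => ?_) hTK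
    have hxT : x ∈ T := by
      by_contra h
      exact hx.2 ⟨h, hx.1⟩
    exact ⟨hxT, hx.1⟩
  -- right translates of lam-null sets are lam-null
  have hRnull : ∀ x : G, lam ((fun u => u * x) ⁻¹' S) = 0 := by
    intro x
    set lam' : Measure G := Measure.map (fun u => u * x) lam with hlam'
    haveI hinv : lam'.IsMulLeftInvariant := by
      constructor
      intro a
      rw [hlam', Measure.map_map (measurable_const_mul a) (measurable_mul_const x),
        show ((a * ·) ∘ (· * x)) = ((· * x) ∘ (a * ·)) from
          funext fun u => (mul_assoc a u x).symm,
        ← Measure.map_map (measurable_mul_const x) (measurable_const_mul a),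
        map_mul_left_eq_self lam a]
    haveI hfc : IsFiniteMeasureOnCompacts lam' := by
      constructor
      intro C hC
      rw [hlam', Measure.map_apply (measurable_mul_const x) hC.isClosed.measurableSet]
      have : IsCompact ((fun u => u * x) ⁻¹' C) :=
        (Homeomorph.mulRight x).isCompact_preimage.mpr hC
      exact this.measure_lt_top
    haveI : SigmaFinite lam' := inferInstance
    have huniq := Measure.haarMeasure_unique lam' K₀
    calc lam ((fun u => u * x) ⁻¹' S)
        = lam' S := (Measure.map_apply (measurable_mul_const x) hSmeas).symm
    _ = (lam' K₀ • Measure.haarMeasure K₀) S := by rw [← huniq]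
    _ = lam' K₀ * lam S := by rw [Measure.smul_apply, smul_eq_mul, ← hlam]
    _ = 0 := by rw [hlamS, mul_zero]
  -- Fubini: for lam-a.e. t, μ {x ∈ S | t * x ∈ S} = 0
  set E : Set (G × G) := {p : G × G | p.2 ∈ S ∧ p.1 * p.2 ∈ S} with hE
  have hEmeas : MeasurableSet E :=
    (hSmeas.preimage measurable_snd).inter
      (hSmeas.preimage (measurable_fst.mul measurable_snd))
  have hprod0 : (lam.prod μ) E = 0 := by
    rw [Measure.prod_apply_symm hEmeas]
    have hz : ∀ x : G, lam ((fun u => (u, x)) ⁻¹' E) = 0 := by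
      intro x
      refine measure_mono_null (fun u hu => ?_) (hRnull x)
      exact hu.2
    calc (∫⁻ x, lam ((fun u => (u, x)) ⁻¹' E) ∂μ) = ∫⁻ _, 0 ∂μ :=
      lintegral_congr hz
    _ = 0 := lintegral_zero
  have hae := (Measure.measure_prod_null hEmeas).mp hprod0
  have hnull : lam {t | μ (Prod.mk t ⁻¹' E) ≠ 0} = 0 := by
    have := ae_iff.mp hae
    simpa using this
  obtain ⟨t, htball, htz⟩ : ∃ t ∈ Metric.ball (1:G) r, μ (Prod.mk t ⁻¹' E) = 0 := by
    by_contra hcon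
    push_neg at hcon
    have hsub : Metric.ball (1:G) r ⊆ {t | μ (Prod.mk t ⁻¹' E) ≠ 0} :=
      fun y hy => hcon y hy
    exact Metric.isOpen_ball.measure_ne_zero lam (Metric.nonempty_ball.mpr hr)
      (measure_mono_null hsub hnull)
  -- the final set C
  set C : Set G := {x ∈ S | t * x ∉ S} with hC
  have hCK : C ⊆ K := fun x hx => hx.1.2
  have hCnull : μ (K \ C) = 0 := by
    refine measure_mono_null (fun x hx => ?_) (measure_union_null hmuKS htz)
    by_cases hxS : x ∈ S
    · right
      have htx : t * x ∈ S := by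
        by_contra h
        exact hx.2 ⟨hxS, h⟩
      exact ⟨hxS, htx⟩
    · exact Or.inl ⟨hx.1, hxS⟩
  have htC : t ∈ C * C⁻¹ := hrball C hCK hCnull htball
  obtain ⟨a, ha, b, hb, hab⟩ := htC
  have hb' : b⁻¹ ∈ C := hb
  have hat : a = t * b⁻¹ := eq_mul_inv_iff_mul_eq.mpr hab
  exact hb'.2 (hat ▸ ha.1)

end AuxC

/-- Mospan property: for a regular Borel probability measure `μ` and compact
`K` with `μ(K) > 0`: (a) if `1` is not interior to `KK⁻¹` then `μ₋(K) = 0`,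
equivalently some null sequence `t_n → 1` has `μ(t_nK) → 0`; (b) conversely,
if `G` is a Baire space and `μ₋(K) = 0 < μ(K)`, then there is a null sequence
`t_n → 1` with `μ(t_nK) → 0`, and there is `C ⊆ K` with `μ(K \ C) = 0` such
that `1` is not interior to `CC⁻¹`. -/
theorem stmt_13 {G : Type*} [Group G] [MetricSpace G] [IsTopologicalGroup G]
    [SeparableSpace G] [MeasurableSpace G] [BorelSpace G]
    (hd : ∀ x y z : G, dist (x * z) (y * z) = dist x y)
    (μ : Measure G) [IsProbabilityMeasure μ] [μ.InnerRegular] [μ.OuterRegular]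
    (K : Set G) (hK : IsCompact K) (hμK : 0 < μ K) :
    ((1 : G) ∉ interior (K * K⁻¹) →
      (⨆ (δ : ℝ) (_ : 0 < δ), ⨅ (t : G) (_ : dist (1 : G) t < δ),
        μ ((t * ·) '' K)) = 0 ∧
      ∃ t : ℕ → G, Tendsto t atTop (nhds 1) ∧
        Tendsto (fun n => μ ((t n * ·) '' K)) atTop (nhds 0)) ∧
    (BaireSpace G →
      (⨆ (δ : ℝ) (_ : 0 < δ), ⨅ (t : G) (_ : dist (1 : G) t < δ),
        μ ((t * ·) '' K)) = 0 →
      (∃ t : ℕ → G, Tendsto t atTop (nhds 1) ∧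
        Tendsto (fun n => μ ((t n * ·) '' K)) atTop (nhds 0)) ∧
      ∃ C ⊆ K, μ (K \ C) = 0 ∧ (1 : G) ∉ interior (C * C⁻¹)) := by
  constructor
  · intro hint
    have hex : ∀ (δ : ℝ), 0 < δ → ∀ (ε : ℝ≥0∞), 0 < ε →
        ∃ t : G, dist (1 : G) t < δ ∧ μ ((t * ·) '' K) < ε :=
      fun δ hδ ε hε => aux_exists_small μ K hK hint hδ hε
    exact ⟨aux_supinf_zero μ K hex, aux_seq μ K hex⟩
  · intro _ hsup
    have hex : ∀ (δ : ℝ), 0 < δ → ∀ (ε : ℝ≥0∞), 0 < ε →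
        ∃ t : G, dist (1 : G) t < δ ∧ μ ((t * ·) '' K) < ε :=
      fun δ hδ ε hε => aux_exists_small' μ K hsup hδ hε
    exact ⟨aux_seq μ K hex, aux_C μ K hK hμK hex⟩
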